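/- Let T(t) = max{0, t} (ReLU) and consider the posterior π(α, w | y, σ²) ∝ exp(−‖y − X θ(α,w)‖²/(2σ²) − αᵀα/2 − wᵀw/(2σ²τ_w²)) with θ_j = T(α_j − α₀)w_j. Fix j and let r_j = y − Σ_{k≠j} X_k T(α_k − α₀) w_k − X_j T(α_j − α₀) w_j + X_j T(α_j − α₀) w_j computed with the j-th term removed (i.e., the partial residual). Then the conditional distribution of α_j given (α_{(−j)}, w, y, σ²) is the two-component mixture κ·N_tr(0, 1; −∞, α₀) + (1−κ)·N_tr(ᾱ_j, σ̄_j²; α₀, ∞), where ᾱ_j = (r_j + X_j α₀ w_j)ᵀ X_j w_j / (X_jᵀX_j w_j² + σ²), σ̄_j² = σ²/(X_jᵀX_j w_j² + σ²), and κ = Φ(α₀) e^{−‖r_j‖²/(2σ²)} / [Φ(α₀) e^{−‖r_j‖²/(2σ²)} + (1 − Φ((α₀ − ᾱ_j)/σ̄_j)) σ̄_j e^{ᾱ_j²/(2σ̄_j²) − ‖r_j + X_j α₀ w_j‖²/(2σ²)}]. -/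

import Mathlib

open MeasureTheory ProbabilityTheory Real

noncomputable def stdNormalCDF (x : ℝ) : ℝ :=
  ∫ t in Set.Iic x, ProbabilityTheory.gaussianPDFReal 0 1 t

lemma setInt_pos (s : Set ℝ) (hs : MeasurableSet s) (h : volume s ≠ 0) :
    0 < ∫ t in s, gaussianPDFReal 0 1 t := by
  rw [setIntegral_pos_iff_support_of_nonneg_ae
    (ae_of_all _ fun t => (gaussianPDFReal_pos 0 1 t one_ne_zero).le)
    ((integrable_gaussianPDFReal 0 1).integrableOn)]
  have hsupp : Function.support (gaussianPDFReal 0 1) = Set.univ :=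
    Set.eq_univ_of_forall fun t => (gaussianPDFReal_pos 0 1 t one_ne_zero).ne'
  rw [hsupp, Set.univ_inter]
  exact h.bot_lt

lemma stdNormalCDF_pos (x : ℝ) : 0 < stdNormalCDF x := by
  apply setInt_pos _ measurableSet_Iic
  simp [Real.volume_Iic]

lemma stdNormalCDF_lt_one (x : ℝ) : stdNormalCDF x < 1 := by
  have h1 : (∫ t in Set.Iic x, gaussianPDFReal 0 1 t)
      + ∫ t in Set.Ioi x, gaussianPDFReal 0 1 t = 1 := by
    rw [intervalIntegral.integral_Iic_add_Ioi ((integrable_gaussianPDFReal 0 1).integrableOn)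
      ((integrable_gaussianPDFReal 0 1).integrableOn)]
    exact integral_gaussianPDFReal_eq_one 0 one_ne_zero
  have h2 : 0 < ∫ t in Set.Ioi x, gaussianPDFReal 0 1 t := by
    apply setInt_pos _ measurableSet_Ioi
    simp [Real.volume_Ioi]
  rw [stdNormalCDF]; linarith

set_option maxHeartbeats 1000000 in
/-- With ReLU activation, the conditional (unnormalized) posterior density of
`α_j` given the rest is proportional to the two-component mixture
`κ·N_tr(0,1; −∞,α₀) + (1−κ)·N_tr(ᾱ_j, σ̄_j²; α₀, ∞)` with the stated `ᾱ_j, σ̄_j², κ`. -/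
theorem stmt9 (n : ℕ) (r Xj : EuclideanSpace ℝ (Fin n)) (wj σ τw α₀ : ℝ)
    (hσ : 0 < σ) (hτ : 0 < τw)
    (v : ℝ) (hv : v = (inner ℝ Xj Xj : ℝ) * wj ^ 2 + σ ^ 2)
    (abar : ℝ) (habar : abar = (inner ℝ (r + (α₀ * wj) • Xj) Xj : ℝ) * wj / v)
    (sbar : ℝ) (hsbar : sbar = Real.sqrt (σ ^ 2 / v))
    (κ : ℝ)
    (hκ : κ = stdNormalCDF α₀ * Real.exp (-‖r‖ ^ 2 / (2 * σ ^ 2))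
        / (stdNormalCDF α₀ * Real.exp (-‖r‖ ^ 2 / (2 * σ ^ 2))
          + (1 - stdNormalCDF ((α₀ - abar) / sbar)) * sbar
            * Real.exp (abar ^ 2 / (2 * sbar ^ 2)
                - ‖r + (α₀ * wj) • Xj‖ ^ 2 / (2 * σ ^ 2)))) :
    ∃ Z : ℝ, 0 < Z ∧ ∀ t : ℝ,
      Real.exp (-‖r - (max 0 (t - α₀) * wj) • Xj‖ ^ 2 / (2 * σ ^ 2) - t ^ 2 / 2)
        = Z * (κ * (if t < α₀ then gaussianPDFReal 0 1 t / stdNormalCDF α₀ else 0)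
            + (1 - κ)
              * (if α₀ ≤ t then
                  gaussianPDFReal abar (Real.toNNReal (σ ^ 2 / v)) t
                    / (1 - stdNormalCDF ((α₀ - abar) / sbar))
                else 0)) := by
  have hX2 : (0:ℝ) ≤ (inner ℝ Xj Xj : ℝ) := real_inner_self_nonneg
  have hvpos : 0 < v := by rw [hv]; nlinarith [sq_nonneg wj, sq_nonneg σ]
  have hsbarpos : 0 < sbar := by
    rw [hsbar]; exact Real.sqrt_pos.mpr (by positivity)
  have hs2 : sbar ^ 2 = σ ^ 2 / v := by
    rw [hsbar]; exact Real.sq_sqrt (by positivity)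
  have hΦ0 := stdNormalCDF_pos α₀
  have hΦc := stdNormalCDF_lt_one ((α₀ - abar) / sbar)
  set Φ0 := stdNormalCDF α₀ with hΦ0def
  set Φc := stdNormalCDF ((α₀ - abar) / sbar) with hΦcdef
  set A := Φ0 * Real.exp (-‖r‖ ^ 2 / (2 * σ ^ 2)) with hA
  set B := (1 - Φc) * sbar
      * Real.exp (abar ^ 2 / (2 * sbar ^ 2) - ‖r + (α₀ * wj) • Xj‖ ^ 2 / (2 * σ ^ 2)) with hB
  have hApos : 0 < A := by positivity
  have hBpos : 0 < B := by
    have : 0 < 1 - Φc := by linarith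
    positivity
  have hABne : A + B ≠ 0 := by positivity
  have hsqpi : (0:ℝ) < Real.sqrt (2 * π) := Real.sqrt_pos.mpr (by positivity)
  refine ⟨Real.sqrt (2 * π) * (A + B), by positivity, fun t => ?_⟩
  have hκA : κ = A / (A + B) := hκ
  by_cases ht : t < α₀
  · rw [if_pos ht, if_neg (not_le.mpr ht), mul_zero, add_zero]
    have hmax : max 0 (t - α₀) = 0 := max_eq_left (by linarith)
    rw [hmax, zero_mul, zero_smul, sub_zero]
    rw [hκA, gaussianPDFReal]
    push_cast
    rw [mul_one, sub_zero]
    rw [show -‖r‖ ^ 2 / (2 * σ ^ 2) - t ^ 2 / 2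
        = -‖r‖ ^ 2 / (2 * σ ^ 2) + (- t ^ 2 / (2:ℝ)) by ring, Real.exp_add]
    rw [hA]
    field_simp
  · rw [if_neg ht, if_pos (not_lt.mp ht), mul_zero, zero_add]
    have hmax : max 0 (t - α₀) = t - α₀ := max_eq_right (by linarith [not_lt.mp ht])
    rw [hmax]
    have hrw : r - ((t - α₀) * wj) • Xj = (r + (α₀ * wj) • Xj) - (t * wj) • Xj := by
      rw [show ((t - α₀) * wj) • Xj = (t * wj) • Xj - (α₀ * wj) • Xj by
        rw [← sub_smul]; ring_nf]
      abel
    rw [hrw]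
    set rt := r + (α₀ * wj) • Xj with hrt
    have hnorm : ‖rt - (t * wj) • Xj‖ ^ 2
        = ‖rt‖ ^ 2 - 2 * (t * wj) * (inner ℝ rt Xj : ℝ) + (t * wj) ^ 2 * (inner ℝ Xj Xj : ℝ) := by
      rw [norm_sub_sq_real, real_inner_smul_right, norm_smul, Real.norm_eq_abs, mul_pow,
        sq_abs, real_inner_self_eq_norm_sq]
      ring
    have h1κ : 1 - κ = B / (A + B) := by rw [hκA]; field_simp; ring
    have hcoe : ((Real.toNNReal (σ ^ 2 / v)) : ℝ) = σ ^ 2 / v :=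
      Real.coe_toNNReal _ (by positivity)
    rw [h1κ, gaussianPDFReal, hcoe]
    have hsqrt : Real.sqrt (2 * π * (σ ^ 2 / v)) = Real.sqrt (2 * π) * sbar := by
      rw [Real.sqrt_mul (by positivity), hsbar]
    rw [hsqrt, hnorm]
    have hp : (inner ℝ rt Xj : ℝ) * wj = abar * v := by
      rw [habar]; field_simp
    have hexpo : -(‖rt‖ ^ 2 - 2 * (t * wj) * (inner ℝ rt Xj : ℝ)
          + (t * wj) ^ 2 * (inner ℝ Xj Xj : ℝ)) / (2 * σ ^ 2) - t ^ 2 / 2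
        = (abar ^ 2 / (2 * sbar ^ 2) - ‖rt‖ ^ 2 / (2 * σ ^ 2))
          + (-(t - abar) ^ 2 / (2 * (σ ^ 2 / v))) := by
      rw [hs2]
      have hX2v : (inner ℝ Xj Xj : ℝ) * wj ^ 2 = v - σ ^ 2 := by rw [hv]; ring
      have hd : ∀ a : ℝ, a / (2 * (σ ^ 2 / v)) = a * v / (2 * σ ^ 2) := by
        intro a; field_simp
      simp only [hd]
      linear_combination (norm := (field_simp; ring))
        (t / σ ^ 2) * hp - (t ^ 2 / (2 * σ ^ 2)) * hX2v
    rw [hexpo, Real.exp_add]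
    have h1Φc : 1 - Φc ≠ 0 := by linarith
    have hsbne : sbar ≠ 0 := ne_of_gt hsbarpos
    set eE := rexp (abar ^ 2 / (2 * sbar ^ 2) - ‖rt‖ ^ 2 / (2 * σ ^ 2)) with heE
    set eG := rexp (-(t - abar) ^ 2 / (2 * (σ ^ 2 / v))) with heG
    have hABne' : A + (1 - Φc) * sbar * eE ≠ 0 := by rw [← hB]; exact hABne
    rw [hB]
    field_simp [hsqpi.ne', hsbne, h1Φc, hABne']
    have hne2 : -(eE * Φc * sbar) + eE * sbar + A ≠ 0 := by
      intro h; apply hABne'; linear_combination h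
    have hinv := mul_inv_cancel₀ hne2
    linear_combination (-(eE * eG)) * hinv
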